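/- Fix i ≠ j and a non-negative integer n. The operator f ↦ ((z_i + z_j)/(z_i - z_j)) · (f - K_{ij} f) maps both the triangular module P_n (total degree ≤ n) and the rectangular module R_n (degree ≤ n in each variable) into themselves. -/

import Mathlib

open MvPolynomial Finsupp

-- telescoping identity
private lemma telescope' {R : Type*} [CommRing R] (x y : R) (a b : ℕ) (h : b ≤ a) :
    (x - y) * ∑ t ∈ Finset.range (a - b), x ^ (b + t) * y ^ (a - 1 - t)
      = x ^ a * y ^ b - x ^ b * y ^ a := by
  rw [Finset.mul_sum]
  have hc : ∀ t ∈ Finset.range (a - b),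
      (x - y) * (x ^ (b + t) * y ^ (a - 1 - t))
        = x ^ (b + (t + 1)) * y ^ (a - (t + 1)) - x ^ (b + t) * y ^ (a - t) := by
    intro t ht
    rw [Finset.mem_range] at ht
    have h1 : a - (t + 1) = a - 1 - t := by omega
    have h2 : a - t = (a - 1 - t) + 1 := by omega
    rw [h1, h2]
    ring
  rw [Finset.sum_congr rfl hc,
    Finset.sum_range_sub (fun t => x ^ (b + t) * y ^ (a - t))]
  have h3 : b + (a - b) = a := by omega
  have h4 : a - (a - b) = b := by omega
  rw [h3, h4, Nat.sub_zero, add_zero]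

private lemma degOf_monomial_le {F : Type*} [Field F] {N : ℕ} (k : Fin N)
    (m : Fin N →₀ ℕ) (c : F) :
    ((monomial m c : MvPolynomial (Fin N) F)).degreeOf k ≤ m k := by
  classical
  rcases eq_or_ne c 0 with rfl | hc
  · simp
  · rw [degreeOf_monomial_eq _ _ hc]

private lemma key_mono {F : Type*} [Field F] {N : ℕ} (i j : Fin N) (hij : i ≠ j)
    (d' : Fin N →₀ ℕ) (c : F) (a b : ℕ) (hb : b ≤ a)
    (hd'i : d' i = 0) (hd'j : d' j = 0) :
    ∃ q : MvPolynomial (Fin N) F,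
      (X i - X j) * q = monomial d' c * (X i ^ a * X j ^ b - X i ^ b * X j ^ a) ∧
      ((X i + X j) * q).totalDegree ≤ d'.sum (fun _ e => e) + (a + b) ∧
      ∀ k, ((X i + X j) * q).degreeOf k ≤ max (d' k) a := by
  classical
  refine ⟨monomial d' c * ∑ t ∈ Finset.range (a - b), X i ^ (b + t) * X j ^ (a - 1 - t),
    ?_, ?_, ?_⟩
  · rw [mul_left_comm, telescope' _ _ _ _ hb]
  · rw [Finset.mul_sum, Finset.mul_sum]
    apply totalDegree_finsetSum_le
    intro t ht
    rw [Finset.mem_range] at ht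
    calc ((X i + X j) * (monomial d' c * (X i ^ (b + t) * X j ^ (a - 1 - t)))).totalDegree
        ≤ (X i + X j : MvPolynomial (Fin N) F).totalDegree +
            (monomial d' c * (X i ^ (b + t) * X j ^ (a - 1 - t))).totalDegree :=
          totalDegree_mul _ _
      _ ≤ (X i + X j : MvPolynomial (Fin N) F).totalDegree +
            ((monomial d' c : MvPolynomial (Fin N) F).totalDegree +
              (X i ^ (b + t) * X j ^ (a - 1 - t) : MvPolynomial (Fin N) F).totalDegree) :=
          by exact Nat.add_le_add_left (totalDegree_mul _ _) _
      _ ≤ 1 + (d'.sum (fun _ e => e) + ((b + t) + (a - 1 - t))) := by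
          gcongr
          · exact (totalDegree_add _ _).trans (by simp [totalDegree_X])
          · exact totalDegree_monomial_le _ _
          · exact (totalDegree_mul _ _).trans
              (by simp [totalDegree_X_pow])
      _ ≤ d'.sum (fun _ e => e) + (a + b) := by omega
  · intro k
    rw [Finset.mul_sum, Finset.mul_sum]
    refine (degreeOf_sum_le _ _ _).trans (Finset.sup_le ?_)
    intro t ht
    rw [Finset.mem_range] at ht
    have h1 : ((X i + X j) * (monomial d' c * (X i ^ (b + t) * X j ^ (a - 1 - t)))).degreeOf k
        ≤ (X i + X j : MvPolynomial (Fin N) F).degreeOf k + ((monomial d' c :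
            MvPolynomial (Fin N) F).degreeOf k +
            ((X i ^ (b + t) : MvPolynomial (Fin N) F).degreeOf k +
              (X j ^ (a - 1 - t) : MvPolynomial (Fin N) F).degreeOf k)) := by
      refine (degreeOf_mul_le _ _ _).trans ?_
      gcongr
      refine (degreeOf_mul_le _ _ _).trans ?_
      gcongr <;> exact (degreeOf_mul_le _ _ _).trans le_rfl
    have hXadd : (X i + X j : MvPolynomial (Fin N) F).degreeOf k
        ≤ if k = i ∨ k = j then 1 else 0 := by
      refine (degreeOf_add_le _ _ _).trans ?_
      rw [degreeOf_X, degreeOf_X]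
      split_ifs <;> simp_all
    have hXi : (X i ^ (b + t) : MvPolynomial (Fin N) F).degreeOf k
        ≤ (Finsupp.single i (b + t)) k := by
      rw [X_pow_eq_monomial]; exact degOf_monomial_le _ _ _
    have hXj : (X j ^ (a - 1 - t) : MvPolynomial (Fin N) F).degreeOf k
        ≤ (Finsupp.single j (a - 1 - t)) k := by
      rw [X_pow_eq_monomial]; exact degOf_monomial_le _ _ _
    have hm := degOf_monomial_le k d' c
    refine h1.trans ?_
    rcases eq_or_ne k i with rfl | hki
    · simp [Finsupp.single_apply, Ne.symm hij] at hXj hXadd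
      rw [Finsupp.single_eq_same] at hXi
      rw [hd'i] at hm
      omega
    rcases eq_or_ne k j with rfl | hkj
    · simp [Finsupp.single_apply, hij] at hXi hXadd
      rw [Finsupp.single_eq_same] at hXj
      rw [hd'j] at hm
      omega
    · simp [Finsupp.single_apply, Ne.symm hki, Ne.symm hkj, hki, hkj] at hXi hXj hXadd
      omega

private lemma degreeOf_neg' {F : Type*} [Field F] {N : ℕ} (k : Fin N)
    (p : MvPolynomial (Fin N) F) : (-p).degreeOf k = p.degreeOf k := by
  classical
  simp [degreeOf_eq_sup]

private lemma key_mono' {F : Type*} [Field F] {N : ℕ} (i j : Fin N) (hij : i ≠ j)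
    (d : Fin N →₀ ℕ) (c : F) :
    ∃ q : MvPolynomial (Fin N) F,
      monomial d c - rename (Equiv.swap i j) (monomial d c) = (X i - X j) * q ∧
      ((X i + X j) * q).totalDegree ≤ d.sum (fun _ e => e) ∧
      ∀ k, ((X i + X j) * q).degreeOf k ≤ max (d k) (max (d i) (d j)) := by
  classical
  set d' : Fin N →₀ ℕ := (d.erase i).erase j with hd'
  have hd'i : d' i = 0 := by simp [hd', Finsupp.erase_apply, Ne.symm hij]
  have hd'j : d' j = 0 := by simp [hd', Finsupp.erase_apply]
  have hd'k : ∀ k, d' k ≤ d k := by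
    intro k
    rcases eq_or_ne k i with rfl | h1
    · rw [hd'i]; exact Nat.zero_le _
    rcases eq_or_ne k j with rfl | h2
    · rw [hd'j]; exact Nat.zero_le _
    · simp [hd', Finsupp.erase_apply, h1, h2]
  have hdec : d = d' + Finsupp.single i (d i) + Finsupp.single j (d j) := by
    ext x
    rcases eq_or_ne x i with rfl | h1
    · simp [hd'i, Finsupp.single_apply, Ne.symm hij]
    rcases eq_or_ne x j with rfl | h2
    · simp [hd'j, Finsupp.single_apply, hij]
    · simp [hd', Finsupp.erase_apply, h1, h2, Finsupp.single_apply, Ne.symm h1, Ne.symm h2]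
  have hsum : d.sum (fun _ e => e) = d'.sum (fun _ e => e) + (d i + d j) := by
    conv_lhs => rw [hdec]
    rw [Finsupp.sum_add_index' (fun _ => rfl) (fun _ _ _ => rfl),
      Finsupp.sum_add_index' (fun _ => rfl) (fun _ _ _ => rfl),
      Finsupp.sum_single_index rfl, Finsupp.sum_single_index rfl]
    ring
  have hmono : (monomial d c : MvPolynomial (Fin N) F)
      = monomial d' c * (X i ^ d i * X j ^ d j) := by
    rw [X_pow_eq_monomial, X_pow_eq_monomial, monomial_mul, monomial_mul, one_mul, mul_one,
      ← add_assoc, ← hdec]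
  have hswap : rename (Equiv.swap i j) (monomial d c : MvPolynomial (Fin N) F)
      = monomial d' c * (X i ^ d j * X j ^ d i) := by
    rw [rename_monomial]
    have : Finsupp.mapDomain (Equiv.swap i j) d
        = d' + Finsupp.single i (d j) + Finsupp.single j (d i) := by
      ext x
      rw [Finsupp.mapDomain_equiv_apply]
      rcases eq_or_ne x i with rfl | h1
      · simp [Equiv.symm_swap, Equiv.swap_apply_left, hd'i, Finsupp.single_apply,
          Ne.symm hij, hij]
      rcases eq_or_ne x j with rfl | h2
      · simp [Equiv.symm_swap, Equiv.swap_apply_right, hd'j, Finsupp.single_apply, hij]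
      · simp [Equiv.symm_swap, Equiv.swap_apply_of_ne_of_ne h1 h2, hd',
          Finsupp.erase_apply, h1, h2, Finsupp.single_apply, Ne.symm h1, Ne.symm h2]
    rw [this, X_pow_eq_monomial, X_pow_eq_monomial, monomial_mul, monomial_mul, one_mul,
      mul_one, ← add_assoc]
  have hdiff : monomial d c - rename (Equiv.swap i j) (monomial d c : MvPolynomial (Fin N) F)
      = monomial d' c * (X i ^ d i * X j ^ d j - X i ^ d j * X j ^ d i) := by
    rw [hswap, hmono, mul_sub]
  rcases le_total (d j) (d i) with hb | hb
  · obtain ⟨q, hq1, hq2, hq3⟩ := key_mono i j hij d' c (d i) (d j) hb hd'i hd'j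
    refine ⟨q, by rw [hdiff, hq1], hq2.trans (by omega), fun k => (hq3 k).trans ?_⟩
    have := hd'k k
    omega
  · obtain ⟨q, hq1, hq2, hq3⟩ := key_mono j i hij.symm d' c (d j) (d i) hb hd'j hd'i
    refine ⟨-q, ?_, ?_, fun k => ?_⟩
    · rw [hdiff, mul_neg, ← neg_mul, neg_sub, hq1]
      ring
    · rw [mul_neg, totalDegree_neg]
      have : (X i + X j) * q = (X j + X i) * q := by ring
      rw [this]
      exact hq2.trans (by omega)
    · rw [mul_neg, degreeOf_neg']
      have : (X i + X j) * q = (X j + X i) * q := by ring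
      rw [this]
      refine (hq3 k).trans ?_
      have := hd'k k
      omega

theorem Qzero_preserves_modules {F : Type*} [Field F] {N : ℕ}
    (i j : Fin N) (hij : i ≠ j) (n : ℕ) (f : MvPolynomial (Fin N) F) :
    ∃ q : MvPolynomial (Fin N) F,
      f - rename (Equiv.swap i j) f = (X i - X j) * q ∧
        (f.totalDegree ≤ n → ((X i + X j) * q).totalDegree ≤ n) ∧
        ((∀ k, f.degreeOf k ≤ n) → ∀ k, ((X i + X j) * q).degreeOf k ≤ n) := by
  classical
  have H : ∀ d : Fin N →₀ ℕ, ∃ q : MvPolynomial (Fin N) F,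
      monomial d (coeff d f) - rename (Equiv.swap i j) (monomial d (coeff d f))
        = (X i - X j) * q ∧
      ((X i + X j) * q).totalDegree ≤ d.sum (fun _ e => e) ∧
      ∀ k, ((X i + X j) * q).degreeOf k ≤ max (d k) (max (d i) (d j)) :=
    fun d => key_mono' i j hij d (coeff d f)
  choose Q hQ1 hQ2 hQ3 using H
  refine ⟨∑ d ∈ f.support, Q d, ?_, ?_, ?_⟩
  · conv_lhs => rw [f.as_sum]
    rw [map_sum, ← Finset.sum_sub_distrib, Finset.mul_sum]
    exact Finset.sum_congr rfl fun d _ => hQ1 d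
  · intro hf
    rw [Finset.mul_sum]
    apply totalDegree_finsetSum_le
    intro d hd
    exact (hQ2 d).trans ((le_totalDegree hd).trans hf)
  · intro hf k
    rw [Finset.mul_sum]
    refine (degreeOf_sum_le _ _ _).trans (Finset.sup_le ?_)
    intro d hd
    refine (hQ3 d k).trans ?_
    have h1 := (monomial_le_degreeOf k hd).trans (hf k)
    have h2 := (monomial_le_degreeOf i hd).trans (hf i)
    have h3 := (monomial_le_degreeOf j hd).trans (hf j)
    omega
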